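/- (Lower bound of Proposition 1.) Let c = (c₁,…,c_N) ∈ ℝ^N with cᵢ > 0 and ‖c‖ = 1, let c_ξ = min_i cᵢ, and let u, v ∈ ℝ^N. Set Δ = ‖u − v‖ and δ = ‖Φ_c(u) − Φ_c(v)‖. If 0 < Δ ≤ π·c_ξ, then (2/π)·Δ ≤ (sin(Δ/(2c_ξ))/(Δ/(2c_ξ)))·Δ = 2 c_ξ sin(Δ/(2c_ξ)) ≤ δ. -/

import Mathlib

open Real
open scoped RealInnerProductSpace

/-- The map `Φ_c : ℝ^N → ℝ^{2N}`,
`Φ_c(u) = (c₁cos(u₁/c₁), c₁sin(u₁/c₁), …, c_N cos(u_N/c_N), c_N sin(u_N/c_N))`,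
where `ℝ^{2N}` is modeled as `EuclideanSpace ℝ (Fin N × Fin 2)`. -/
noncomputable def PhiTorus {N : ℕ} (c u : EuclideanSpace ℝ (Fin N)) :
    EuclideanSpace ℝ (Fin N × Fin 2) :=
  (WithLp.equiv 2 _).symm fun p =>
    if p.2 = 0 then c p.1 * Real.cos (u p.1 / c p.1)
    else c p.1 * Real.sin (u p.1 / c p.1)

/-- Concavity of `sin` on `[0, π]` gives `a * sin t ≤ t * sin a` for `0 ≤ a ≤ t ≤ π`. -/
lemma aux_sin_concave {a t : ℝ} (ha : 0 ≤ a) (hat : a ≤ t) (htπ : t ≤ π) :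
    a * Real.sin t ≤ t * Real.sin a := by
  rcases eq_or_lt_of_le (ha.trans hat) with h | htpos
  · simp [← h]
  have hmem0 : (0:ℝ) ∈ Set.Icc 0 π := ⟨le_refl _, Real.pi_pos.le⟩
  have hmemt : t ∈ Set.Icc 0 π := ⟨htpos.le, htπ⟩
  have hb : 0 ≤ a / t := div_nonneg ha htpos.le
  have hl : 0 ≤ 1 - a / t := by
    have : a / t ≤ 1 := (div_le_one htpos).2 hat
    linarith
  have hsum : (1 - a / t) + a / t = 1 := by ring
  have := strictConcaveOn_sin_Icc.concaveOn.2 hmem0 hmemt hl hb hsum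
  simp only [smul_eq_mul, mul_zero, Real.sin_zero, zero_add] at this
  have ht' : a / t * t = a := by field_simp
  rw [ht'] at this
  have h2 := mul_le_mul_of_nonneg_left this htpos.le
  calc a * Real.sin t = t * (a / t * Real.sin t) := by field_simp
    _ ≤ t * Real.sin a := h2

set_option maxHeartbeats 1000000 in
/-- Lower bound of Proposition 1, where cξ = min_i c_i. -/
theorem stmt_4 (N : ℕ) (c : EuclideanSpace ℝ (Fin N)) (hc : ∀ i, 0 < c i)
    (hnorm : ‖c‖ = 1) (cξ : ℝ) (hξ : IsLeast (Set.range fun i => c i) cξ)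
    (u v : EuclideanSpace ℝ (Fin N)) (Δ δ : ℝ)
    (hΔ : Δ = ‖u - v‖) (hδ : δ = ‖PhiTorus c u - PhiTorus c v‖)
    (h0 : 0 < Δ) (hπ : Δ ≤ π * cξ) :
    2 / π * Δ ≤ 2 * cξ * Real.sin (Δ / (2 * cξ)) ∧
      Real.sin (Δ / (2 * cξ)) / (Δ / (2 * cξ)) * Δ = 2 * cξ * Real.sin (Δ / (2 * cξ)) ∧
      2 * cξ * Real.sin (Δ / (2 * cξ)) ≤ δ := by
  have hπpos := Real.pi_pos
  obtain ⟨⟨ξ, hξeq⟩, hξlb⟩ := hξ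
  have hξpos : 0 < cξ := hξeq ▸ hc ξ
  have hξle : ∀ i, cξ ≤ c i := fun i => hξlb ⟨i, rfl⟩
  set t : ℝ := Δ / (2 * cξ) with ht
  have htpos : 0 < t := div_pos h0 (by linarith)
  have htle : t ≤ π / 2 := by
    rw [ht, div_le_div_iff₀ (by linarith) (by norm_num)]
    nlinarith
  have hΔt : Δ = 2 * cξ * t := by rw [ht]; field_simp
  have hsin_t_nonneg : 0 ≤ Real.sin t :=
    Real.sin_nonneg_of_nonneg_of_le_pi htpos.le (by linarith)
  refine ⟨?_, ?_, ?_⟩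
  · -- Jordan's inequality
    have := Real.mul_le_sin htpos.le htle
    nlinarith
  · rw [hΔt]
    field_simp
  · -- main lower bound
    have hδnn : 0 ≤ δ := hδ ▸ norm_nonneg _
    have hsq : (2 * cξ * Real.sin t) ^ 2 ≤ δ ^ 2 := by
      have hδsq : δ ^ 2 = ∑ p : Fin N × Fin 2, ‖(PhiTorus c u - PhiTorus c v) p‖ ^ 2 := by
        rw [hδ, EuclideanSpace.norm_eq, Real.sq_sqrt]
        positivity
      have hΔsq : Δ ^ 2 = ∑ i, (u i - v i) ^ 2 := by
        rw [hΔ, EuclideanSpace.norm_eq, Real.sq_sqrt (by positivity)]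
        simp [sq_abs]
      -- per-coordinate computation of Φ difference
      have hcoord : ∀ i : Fin N,
          (∑ j : Fin 2, ‖(PhiTorus c u - PhiTorus c v) (i, j)‖ ^ 2)
            = 4 * c i ^ 2 * Real.sin ((u i - v i) / (2 * c i)) ^ 2 := by
        intro i
        have hci := hc i
        have hcne : c i ≠ 0 := hci.ne'
        simp only [PhiTorus, PiLp.sub_apply, Fin.sum_univ_two,
          Real.norm_eq_abs, sq_abs]
        norm_num
        have h2y : 2 * ((u i - v i) / (2 * c i)) = u i / c i - v i / c i := by
          field_simp
        have hct := Real.cos_two_mul ((u i - v i) / (2 * c i))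
        rw [h2y] at hct
        have hcs := Real.cos_sub (u i / c i) (v i / c i)
        linear_combination (c i) ^ 2 * Real.sin_sq_add_cos_sq (u i / c i)
          + (c i) ^ 2 * Real.sin_sq_add_cos_sq (v i / c i)
          + 2 * (c i) ^ 2 * hcs
          - 4 * (c i) ^ 2 * Real.sin_sq_add_cos_sq ((u i - v i) / (2 * c i))
          - 2 * (c i) ^ 2 * hct
      -- per-coordinate lower bound
      have hbound : ∀ i : Fin N,
          (u i - v i) ^ 2 * (Real.sin t / t) ^ 2
            ≤ 4 * c i ^ 2 * Real.sin ((u i - v i) / (2 * c i)) ^ 2 := by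
        intro i
        have hci := hc i
        set a : ℝ := |u i - v i| / (2 * c i) with haa
        have hanonneg : 0 ≤ a := by positivity
        have hile : |u i - v i| ≤ Δ := by
          rw [hΔ, EuclideanSpace.norm_eq]
          have : |u i - v i| = Real.sqrt (|u i - v i| ^ 2) := by
            rw [Real.sqrt_sq_eq_abs, abs_abs]
          rw [this]
          apply Real.sqrt_le_sqrt
          have : ‖(u - v) i‖ ^ 2 = |u i - v i| ^ 2 := by
            simp [Real.norm_eq_abs]
          rw [← this]
          exact Finset.single_le_sum (f := fun j => ‖(u - v) j‖ ^ 2)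
            (fun j _ => by positivity) (Finset.mem_univ i)
        have hat : a ≤ t := by
          rw [haa, ht]
          exact div_le_div₀ h0.le hile (by linarith) (by linarith [hξle i])
        have hsa : a * Real.sin t ≤ t * Real.sin a :=
          aux_sin_concave hanonneg hat (by linarith)
        have hsin_a_nonneg : 0 ≤ Real.sin a :=
          Real.sin_nonneg_of_nonneg_of_le_pi hanonneg (by linarith)
        have hsinabs : Real.sin ((u i - v i) / (2 * c i)) ^ 2 = Real.sin a ^ 2 := by
          have hax : a = |(u i - v i) / (2 * c i)| := by
            rw [haa, abs_div, abs_of_pos (show (0:ℝ) < 2 * c i by linarith)]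
          rw [hax]
          rcases abs_choice ((u i - v i) / (2 * c i)) with h | h
          · rw [h]
          · rw [h, Real.sin_neg, neg_sq]
        rw [hsinabs]
        have h1 : (u i - v i) ^ 2 = (2 * c i * a) ^ 2 := by
          rw [haa]; field_simp; rw [sq_abs]
        rw [h1]
        have h2 : a * (Real.sin t / t) ≤ Real.sin a := by
          rw [mul_comm, div_mul_eq_mul_div, div_le_iff₀ htpos]
          nlinarith [hsa]
        have h3 : 0 ≤ a * (Real.sin t / t) := by positivity
        have h4 : (a * (Real.sin t / t)) ^ 2 ≤ Real.sin a ^ 2 :=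
          pow_le_pow_left₀ h3 h2 2
        calc (2 * c i * a) ^ 2 * (Real.sin t / t) ^ 2
            = 4 * c i ^ 2 * (a * (Real.sin t / t)) ^ 2 := by ring
          _ ≤ 4 * c i ^ 2 * Real.sin a ^ 2 :=
              mul_le_mul_of_nonneg_left h4 (by positivity)
      have : Δ ^ 2 * (Real.sin t / t) ^ 2 ≤ δ ^ 2 := by
        rw [hδsq, hΔsq, Finset.sum_mul, Fintype.sum_prod_type]
        exact Finset.sum_le_sum fun i _ => (hbound i).trans_eq (hcoord i).symm
      have heq : Δ ^ 2 * (Real.sin t / t) ^ 2 = (2 * cξ * Real.sin t) ^ 2 := by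
        rw [hΔt]; field_simp
      linarith [heq ▸ this]
    have hpos : 0 ≤ 2 * cξ * Real.sin t := by
      have : (0:ℝ) ≤ 2 * cξ := by linarith
      exact mul_nonneg this hsin_t_nonneg
    nlinarith [hsq, hδnn, hpos]
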